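/- arXiv:1106.1257 — 2 statements merged into one kernel-verified Lean document; each statement's English description precedes it below -/
import Mathlib

section
/- For every real number d with 0 ≤ d ≤ 1, the measure V(R, R + a + b, d) of the set of pairs of points (p, q) with p ∈ R, q ∈ R + a + b and ‖p − q‖ ≤ d equals (3/4)·[(1/6 − π/(18√3))·d⁴]. -/
open MeasureTheory Real

noncomputable section

/-- The vector a = (1, 0) in the Euclidean plane. -/
def va : EuclideanSpace ℝ (Fin 2) := !₂[1, 0]

/-- The vector b = (1/2, √3/2) in the Euclidean plane. -/
def vb : EuclideanSpace ℝ (Fin 2) := !₂[1/2, Real.sqrt 3 / 2]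

/-- The unit rhombus R = {s•a + t•b : s, t ∈ [0,1]}, with unit side and acute angle π/3. -/
def Rhombus : Set (EuclideanSpace ℝ (Fin 2)) :=
  {p | ∃ s t : ℝ, s ∈ Set.Icc (0:ℝ) 1 ∧ t ∈ Set.Icc (0:ℝ) 1 ∧ p = s • va + t • vb}

/-- V(A, B, d): Lebesgue measure of the set of pairs (p, q), p ∈ A, q ∈ B, ‖p − q‖ ≤ d. -/
def V (A B : Set (EuclideanSpace ℝ (Fin 2))) (d : ℝ) : ℝ :=
  (volume {pq : EuclideanSpace ℝ (Fin 2) × EuclideanSpace ℝ (Fin 2) |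
    pq.1 ∈ A ∧ pq.2 ∈ B ∧ ‖pq.1 - pq.2‖ ≤ d}).toReal

/-- The long-diagonal neighbor of the rhombus: R + a + b. -/
def RhombusLD : Set (EuclideanSpace ℝ (Fin 2)) := (fun p => p + va + vb) '' Rhombus

end

open Set
open scoped ENNReal

section Aux

lemma alg_key (d α s : ℝ) (hd : d ≠ 0) (hs' : s ≠ 0)
    (hs : s^2 = 4*d^2 - 3*α^2) :
    α * (((s - α)/2)^2/2) =
      d^2*α/2 - α^3/4 - d^4/(6*s)
        - ((6*α^2 - 4*d^2/3)/32 * s + α*(2*α^2 - 4*d^2/3)/32 * (1/(2*s) * -(6*α))) := by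
  field_simp
  linear_combination (2304*α*s - 1152*α^2 - 768*d^2) * hs

lemma hasDeriv_F (d : ℝ) (hd : 0 < d) (α : ℝ) (h0 : 0 ≤ α) (h1 : α ≤ d) :
    HasDerivAt (fun x : ℝ => d^2*x^2/4 - x^4/16
        - (Real.sqrt 3*d^4/18)*Real.arcsin (Real.sqrt 3*x/(2*d))
        - (x*(2*x^2 - 4*d^2/3)/32)*Real.sqrt (4*d^2 - 3*x^2))
      (α * (((Real.sqrt (4*d^2 - 3*α^2) - α)/2)^2/2)) α := by
  have h3 : Real.sqrt 3 ^ 2 = 3 := Real.sq_sqrt (by norm_num)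
  have h3n : (0:ℝ) ≤ Real.sqrt 3 := Real.sqrt_nonneg 3
  have hs2 : 0 < 4*d^2 - 3*α^2 := by nlinarith
  have hs : Real.sqrt (4*d^2 - 3*α^2) ^ 2 = 4*d^2 - 3*α^2 := Real.sq_sqrt hs2.le
  have hspos : 0 < Real.sqrt (4*d^2 - 3*α^2) := Real.sqrt_pos.2 hs2
  set s := Real.sqrt (4*d^2 - 3*α^2) with hsdef
  have hxlt : Real.sqrt 3*α/(2*d) < 1 := by
    rw [div_lt_one (by linarith)]
    nlinarith
  have hxge : (0:ℝ) ≤ Real.sqrt 3*α/(2*d) := by positivity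
  -- polynomial part
  have hpoly : HasDerivAt (fun x : ℝ => d^2*x^2/4 - x^4/16) (d^2*α/2 - α^3/4) α := by
    have h := ((hasDerivAt_pow 2 α).const_mul (d^2/4)).sub ((hasDerivAt_pow 4 α).const_mul (1/16 : ℝ))
    have hfe : (fun x : ℝ => d^2/4 * x^2 - 1/16 * x^4) = (fun x : ℝ => d^2*x^2/4 - x^4/16) := by
      funext x; ring
    simp only [Pi.sub_def] at h
    rw [hfe] at h
    refine h.congr_deriv (Eq.symm ?_)
    push_cast; ring
  -- arcsin part
  have hu : HasDerivAt (fun x : ℝ => Real.sqrt 3*x/(2*d)) (Real.sqrt 3/(2*d)) α := by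
    have h := (hasDerivAt_id α).const_mul (Real.sqrt 3/(2*d))
    have hfe : (fun x : ℝ => Real.sqrt 3/(2*d) * id x) = (fun x : ℝ => Real.sqrt 3*x/(2*d)) := by
      funext x; simp; ring
    rw [hfe] at h
    refine h.congr_deriv (Eq.symm ?_)
    simp
  have harc : HasDerivAt (fun x : ℝ => Real.arcsin (Real.sqrt 3*x/(2*d)))
      (1/Real.sqrt (1 - (Real.sqrt 3*α/(2*d))^2) * (Real.sqrt 3/(2*d))) α :=
    (Real.hasDerivAt_arcsin (by linarith) (by linarith)).comp α hu
  have harc' := harc.const_mul (Real.sqrt 3*d^4/18)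
  -- sqrt part
  have hw : HasDerivAt (fun x : ℝ => 4*d^2 - 3*x^2) (-(6*α)) α := by
    have h := ((hasDerivAt_pow 2 α).const_mul (3:ℝ)).const_sub (4*d^2)
    refine h.congr_deriv (Eq.symm ?_)
    push_cast; ring
  have hsq : HasDerivAt (fun x : ℝ => Real.sqrt (4*d^2 - 3*x^2)) (1/(2*s) * (-(6*α))) α :=
    (Real.hasDerivAt_sqrt hs2.ne').comp α hw
  have hp : HasDerivAt (fun x : ℝ => x*(2*x^2 - 4*d^2/3)/32) ((6*α^2 - 4*d^2/3)/32) α := by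
    have h := ((hasDerivAt_pow 3 α).const_mul ((2:ℝ)/32)).sub ((hasDerivAt_id α).const_mul ((4*d^2/3)/32))
    have hfe : (fun x : ℝ => 2/32 * x^3 - 4*d^2/3/32 * id x) = (fun x : ℝ => x*(2*x^2 - 4*d^2/3)/32) := by
      funext x; simp; ring
    simp only [Pi.sub_def] at h
    rw [hfe] at h
    refine h.congr_deriv (Eq.symm ?_)
    push_cast; simp; ring
  have hprod := hp.mul hsq
  have htot := (hpoly.sub harc').sub hprod
  have hsub : Real.sqrt (1 - (Real.sqrt 3*α/(2*d))^2) = s/(2*d) := by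
    have he : 1 - (Real.sqrt 3*α/(2*d))^2 = (4*d^2-3*α^2)/(2*d)^2 := by
      field_simp
      nlinarith
    rw [he, hsdef, Real.sqrt_div hs2.le, Real.sqrt_sq (by linarith)]
  have harcval : Real.sqrt 3*d^4/18 * (1/Real.sqrt (1 - (Real.sqrt 3*α/(2*d))^2) * (Real.sqrt 3/(2*d)))
      = d^4/(6*s) := by
    rw [hsub]
    field_simp
    linear_combination 6 * h3
  refine htot.congr_deriv (Eq.symm ?_)
  rw [harcval, ← hsdef]
  clear_value s
  clear hsub hsdef
  exact alg_key d α s hd.ne' hspos.ne' hs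

lemma integral_eval (d : ℝ) (hd : 0 < d) :
    ∫ α in (0:ℝ)..d, α * (((Real.sqrt (4*d^2 - 3*α^2) - α)/2)^2/2)
      = (1/6 - Real.pi/(18*Real.sqrt 3)) * d^4 := by
  have h3 : Real.sqrt 3 ^ 2 = 3 := Real.sq_sqrt (by norm_num)
  have h3p : (0:ℝ) < Real.sqrt 3 := Real.sqrt_pos.2 (by norm_num)
  have hderiv : ∀ α ∈ Set.uIcc (0:ℝ) d,
      HasDerivAt (fun x : ℝ => d^2*x^2/4 - x^4/16
        - (Real.sqrt 3*d^4/18)*Real.arcsin (Real.sqrt 3*x/(2*d))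
        - (x*(2*x^2 - 4*d^2/3)/32)*Real.sqrt (4*d^2 - 3*x^2))
      (α * (((Real.sqrt (4*d^2 - 3*α^2) - α)/2)^2/2)) α := by
    intro α hα
    rw [Set.uIcc_of_le hd.le] at hα
    exact hasDeriv_F d hd α hα.1 hα.2
  have hcont : Continuous (fun α : ℝ => α * (((Real.sqrt (4*d^2 - 3*α^2) - α)/2)^2/2)) := by
    fun_prop
  rw [intervalIntegral.integral_eq_sub_of_hasDerivAt hderiv (hcont.intervalIntegrable 0 d)]
  have harg : Real.sqrt 3*d/(2*d) = Real.sqrt 3/2 := by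
    field_simp
  have harcsin : Real.arcsin (Real.sqrt 3/2) = Real.pi/3 := by
    rw [← Real.sin_pi_div_three]
    exact Real.arcsin_sin (by linarith [Real.pi_pos]) (by linarith [Real.pi_pos])
  have hsq : Real.sqrt (4*d^2 - 3*d^2) = d := by
    rw [show 4*d^2 - 3*d^2 = d^2 by ring, Real.sqrt_sq hd.le]
  simp only [harg, harcsin, hsq, mul_zero, zero_mul, zero_div, Real.arcsin_zero, zero_pow,
    sub_zero]
  have h3ne : Real.sqrt 3 ≠ 0 := h3p.ne'
  field_simp
  ring_nf
  linear_combination (-(d^4) * Real.pi * 12288) * h3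

lemma pairLemma (h : ℝ → ℝ≥0∞) (hm : Measurable h) (h0 : ∀ u : ℝ, 1 < u → h u = 0) :
    ∫⁻ z in (Set.Icc (0:ℝ) 1 ×ˢ Set.Icc (0:ℝ) 1), h (1 - z.1 + z.2)
      = ∫⁻ u in Set.Icc (0:ℝ) 1, ENNReal.ofReal u * h u := by
  have hIm : MeasurableSet (Set.Icc (0:ℝ) 1) := measurableSet_Icc
  have hfm : Measurable (fun z : ℝ × ℝ => h (1 - z.1 + z.2)) := by
    apply hm.comp
    fun_prop
  rw [Measure.volume_eq_prod, ← Measure.prod_restrict, lintegral_prod _ hfm.aemeasurable]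
  -- inner integral: for x ∈ I, equals ∫⁻ u in I, if 1 - x ≤ u then h u
  have hinner : ∀ x ∈ Set.Icc (0:ℝ) 1,
      (∫⁻ y in Set.Icc (0:ℝ) 1, h (1 - x + y)) =
        ∫⁻ u in Set.Icc (0:ℝ) 1, (Set.Ici (1 - x)).indicator h u := by
    intro x hx
    simp only [Set.mem_Icc] at hx
    have hmp : MeasurePreserving (fun y : ℝ => y + (1 - x)) volume volume :=
      measurePreserving_add_right volume (1 - x)
    have hemb : MeasurableEmbedding (fun y : ℝ => y + (1 - x)) :=
      (MeasurableEquiv.addRight (1 - x)).measurableEmbedding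
    have h1 : (∫⁻ y in Set.Icc (0:ℝ) 1, h (1 - x + y)) =
        ∫⁻ u in (fun y : ℝ => y + (1 - x)) '' Set.Icc (0:ℝ) 1, h u := by
      rw [← hmp.setLIntegral_comp_emb hemb h (Set.Icc 0 1)]
      congr 1
      funext y
      ring_nf
    rw [h1]
    have himg : (fun y : ℝ => y + (1 - x)) '' Set.Icc (0:ℝ) 1 = Set.Icc (1 - x) (2 - x) := by
      rw [Set.image_add_const_Icc]
      congr 1 <;> ring
    rw [himg]
    have hsplit : Set.Icc (1 - x) (2 - x) = Set.Icc (1 - x) 1 ∪ Set.Ioc 1 (2 - x) := by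
      rw [Set.Icc_union_Ioc_eq_Icc (by linarith [hx.2]) (by linarith [hx.1])]
    rw [hsplit, lintegral_union measurableSet_Ioc]
    · have hz : (∫⁻ u in Set.Ioc (1:ℝ) (2 - x), h u) = 0 := by
        rw [setLIntegral_congr_fun measurableSet_Ioc
          (fun u hu => h0 u hu.1), lintegral_zero]
      rw [hz, add_zero]
      -- ∫⁻ u in Icc (1-x) 1, h u = ∫⁻ u in Icc 0 1, indicator (Ici (1-x)) h u
      rw [lintegral_indicator measurableSet_Ici, Measure.restrict_restrict measurableSet_Ici]
      have hset : Set.Ici (1-x) ∩ Set.Icc (0:ℝ) 1 = Set.Icc (1-x) 1 := by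
        ext u
        simp only [Set.mem_inter_iff, Set.mem_Ici, Set.mem_Icc]
        constructor
        · rintro ⟨h1u, _, h2u⟩; exact ⟨h1u, h2u⟩
        · rintro ⟨h1u, h2u⟩; exact ⟨h1u, by linarith [hx.2], h2u⟩
      rw [hset]
    · exact Set.disjoint_left.2 (fun u hu hu' => absurd hu.2 (not_le.2 hu'.1))
  rw [setLIntegral_congr_fun hIm hinner]
  -- swap
  have hswap : (∫⁻ x in Set.Icc (0:ℝ) 1, ∫⁻ u in Set.Icc (0:ℝ) 1, (Set.Ici (1 - x)).indicator h u)
      = ∫⁻ u in Set.Icc (0:ℝ) 1, ∫⁻ x in Set.Icc (0:ℝ) 1, (Set.Ici (1 - x)).indicator h u := by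
    apply lintegral_lintegral_swap
    apply Measurable.aemeasurable
    have heq : Function.uncurry (fun x u => (Set.Ici (1 - x)).indicator h u)
        = fun z : ℝ × ℝ => Set.indicator {p : ℝ × ℝ | 1 - p.1 ≤ p.2} (fun p => h p.2) z := by
      funext z
      simp [Function.uncurry, Set.indicator_apply, Set.mem_Ici]
    rw [heq]
    exact Measurable.indicator (hm.comp measurable_snd)
      (measurableSet_le (by fun_prop) (by fun_prop))
  rw [hswap]
  apply setLIntegral_congr_fun hIm
  intro u hu
  simp only [Set.mem_Icc] at hu
  have : ∀ x : ℝ, (Set.Ici (1 - x)).indicator h u = (Set.Ici (1 - u)).indicator (fun _ => h u) x := by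
    intro x
    simp only [Set.indicator_apply, Set.mem_Ici]
    exact if_congr (by constructor <;> intro <;> linarith) rfl rfl
  simp_rw [this]
  rw [lintegral_indicator measurableSet_Ici, Measure.restrict_restrict measurableSet_Ici,
    setLIntegral_const]
  have : Set.Ici (1 - u) ∩ Set.Icc 0 1 = Set.Icc (1 - u) 1 := by
    ext x
    simp only [Set.mem_inter_iff, Set.mem_Ici, Set.mem_Icc]
    constructor
    · rintro ⟨h1x, _, h2x⟩; exact ⟨h1x, h2x⟩
    · rintro ⟨h1x, h2x⟩; exact ⟨h1x, by linarith [hu.2], h2x⟩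
  rw [this, Real.volume_Icc, mul_comm]
  norm_num

lemma L2 (d α : ℝ) (hd0 : 0 < d) (hd1 : d ≤ 1) (hα : 0 ≤ α) :
    (∫⁻ β in Set.Icc (0:ℝ) 1,
        ENNReal.ofReal β * (if α^2 + α*β + β^2 ≤ d^2 then (1:ℝ≥0∞) else 0))
      = ENNReal.ofReal (if α ≤ d then ((Real.sqrt (4*d^2 - 3*α^2) - α)/2)^2/2 else 0) := by
  by_cases hαd : α ≤ d
  · -- main case
    have hs2 : (0:ℝ) < 4*d^2 - 3*α^2 := by nlinarith
    set s := Real.sqrt (4*d^2 - 3*α^2) with hsdef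
    have hs : s^2 = 4*d^2 - 3*α^2 := Real.sq_sqrt hs2.le
    have hsnn : 0 ≤ s := Real.sqrt_nonneg _
    set β₀ := (s - α)/2 with hβ₀def
    have hβ₀0 : 0 ≤ β₀ := by
      have : α ≤ s := by nlinarith
      simp only [hβ₀def]; linarith
    have hβ₀1 : β₀ ≤ 1 := by
      have : s ≤ 2*d := by nlinarith
      simp only [hβ₀def]; linarith
    have hiff : ∀ β : ℝ, 0 ≤ β → (α^2 + α*β + β^2 ≤ d^2 ↔ β ≤ β₀) := by
      intro β hβ
      constructor
      · intro hQ
        by_contra hgt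
        push_neg at hgt
        have h1 : s < 2*β + α := by simp only [hβ₀def] at hgt; linarith
        nlinarith
      · intro hle
        have h1 : 2*β + α ≤ s := by simp only [hβ₀def] at hle; linarith
        nlinarith
    have hcong : ∀ β ∈ Set.Icc (0:ℝ) 1,
        ENNReal.ofReal β * (if α^2 + α*β + β^2 ≤ d^2 then (1:ℝ≥0∞) else 0)
          = (Set.Iic β₀).indicator (fun b => ENNReal.ofReal b) β := by
      intro β hβ
      simp only [Set.mem_Icc] at hβ
      rw [Set.indicator_apply]
      simp only [Set.mem_Iic]
      by_cases hc : β ≤ β₀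
      · rw [if_pos hc, if_pos ((hiff β hβ.1).2 hc), mul_one]
      · rw [if_neg hc, if_neg (fun h => hc ((hiff β hβ.1).1 h)), mul_zero]
    rw [setLIntegral_congr_fun measurableSet_Icc hcong]
    rw [lintegral_indicator measurableSet_Iic, Measure.restrict_restrict measurableSet_Iic]
    have hset : Set.Iic β₀ ∩ Set.Icc (0:ℝ) 1 = Set.Icc 0 β₀ := by
      ext b
      simp only [Set.mem_inter_iff, Set.mem_Iic, Set.mem_Icc]
      constructor
      · rintro ⟨h1, h2, _⟩; exact ⟨h2, h1⟩
      · rintro ⟨h1, h2⟩; exact ⟨h2, h1, by linarith⟩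
    rw [hset, if_pos hαd]
    rw [← MeasureTheory.ofReal_integral_eq_lintegral_ofReal]
    · congr 1
      rw [MeasureTheory.integral_Icc_eq_integral_Ioc,
        ← intervalIntegral.integral_of_le hβ₀0, integral_id]
      simp only [hβ₀def]
      ring
    · exact continuous_id.integrableOn_Icc
    · exact (ae_restrict_iff' measurableSet_Icc).2 (Filter.Eventually.of_forall fun b hb => hb.1)
  · -- α > d : integrand vanishes
    push_neg at hαd
    rw [if_neg (not_le.2 hαd)]
    have hz : ∀ β ∈ Set.Icc (0:ℝ) 1,
        ENNReal.ofReal β * (if α^2 + α*β + β^2 ≤ d^2 then (1:ℝ≥0∞) else 0) = 0 := by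
      intro β hβ
      simp only [Set.mem_Icc] at hβ
      rw [if_neg (by nlinarith), mul_zero]
    rw [setLIntegral_congr_fun measurableSet_Icc hz]
    simp

/-- The box-region volume. -/
lemma Nvol (d : ℝ) (hd0 : 0 < d) (hd1 : d ≤ 1) :
    volume {v : (ℝ × ℝ) × (ℝ × ℝ) |
        (v.1 ∈ Set.Icc (0:ℝ) 1 ×ˢ Set.Icc (0:ℝ) 1) ∧ (v.2 ∈ Set.Icc (0:ℝ) 1 ×ˢ Set.Icc (0:ℝ) 1) ∧
        (1 - v.1.1 + v.1.2)^2 + (1 - v.1.1 + v.1.2)*(1 - v.2.1 + v.2.2)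
          + (1 - v.2.1 + v.2.2)^2 ≤ d^2}
      = ENNReal.ofReal ((1/6 - Real.pi/(18*Real.sqrt 3)) * d^4) := by
  have hI2 : MeasurableSet (Set.Icc (0:ℝ) 1 ×ˢ Set.Icc (0:ℝ) 1) :=
    measurableSet_Icc.prod measurableSet_Icc
  -- notation
  set W : ℝ → ℝ := fun α => if α ≤ d then ((Real.sqrt (4*d^2 - 3*α^2) - α)/2)^2/2 else 0 with hW
  have hWcont : Continuous (fun α : ℝ => ((Real.sqrt (4*d^2 - 3*α^2) - α)/2)^2/2) := by fun_prop
  have hWmeas : Measurable W := by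
    apply Measurable.ite (measurableSet_Iic) hWcont.measurable measurable_const
  have hWnn : ∀ α, 0 ≤ W α := by
    intro α
    simp only [hW]
    split <;> positivity
  -- the set as product-measure calculation
  have hQmeas : ∀ α : ℝ, Measurable (fun β : ℝ => if α^2 + α*β + β^2 ≤ d^2 then (1:ℝ≥0∞) else 0) := by
    intro α
    exact Measurable.ite (measurableSet_le (by fun_prop) (by fun_prop)) measurable_const
      measurable_const
  -- inner volume for fixed u with α := 1 - u.1 + u.2 ≥ 0
  have hinner : ∀ α : ℝ, 0 ≤ α →
      volume {v : ℝ × ℝ | v ∈ Set.Icc (0:ℝ) 1 ×ˢ Set.Icc (0:ℝ) 1 ∧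
          α^2 + α*(1 - v.1 + v.2) + (1 - v.1 + v.2)^2 ≤ d^2}
        = ENNReal.ofReal (W α) := by
    intro α hα
    have hseteq : {v : ℝ × ℝ | v ∈ Set.Icc (0:ℝ) 1 ×ˢ Set.Icc (0:ℝ) 1 ∧
          α^2 + α*(1 - v.1 + v.2) + (1 - v.1 + v.2)^2 ≤ d^2}
        = {v : ℝ × ℝ | α^2 + α*(1 - v.1 + v.2) + (1 - v.1 + v.2)^2 ≤ d^2}
            ∩ (Set.Icc (0:ℝ) 1 ×ˢ Set.Icc (0:ℝ) 1) := by
      ext v; simp only [Set.mem_setOf_eq, Set.mem_inter_iff]; tauto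
    have hcm : MeasurableSet {v : ℝ × ℝ | α^2 + α*(1 - v.1 + v.2) + (1 - v.1 + v.2)^2 ≤ d^2} :=
      measurableSet_le (by fun_prop) (by fun_prop)
    rw [hseteq, ← Measure.restrict_apply hcm, ← lintegral_indicator_one hcm]
    have : ∀ v : ℝ × ℝ, ({v : ℝ × ℝ | α^2 + α*(1 - v.1 + v.2) + (1 - v.1 + v.2)^2 ≤ d^2}).indicator
          (1 : ℝ × ℝ → ℝ≥0∞) v
        = (fun β : ℝ => if α^2 + α*β + β^2 ≤ d^2 then (1:ℝ≥0∞) else 0) (1 - v.1 + v.2) := by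
      intro v
      simp [Set.indicator_apply, Pi.one_apply]
    rw [lintegral_congr this]
    rw [pairLemma _ (hQmeas α) (fun β hβ => by rw [if_neg (by nlinarith)])]
    exact L2 d α hd0 hd1 hα
  -- outer reduction
  have hcondm : MeasurableSet {v : (ℝ × ℝ) × (ℝ × ℝ) |
      (1 - v.1.1 + v.1.2)^2 + (1 - v.1.1 + v.1.2)*(1 - v.2.1 + v.2.2)
        + (1 - v.2.1 + v.2.2)^2 ≤ d^2} :=
    measurableSet_le (by fun_prop) (by fun_prop)
  have hBeq : {v : (ℝ × ℝ) × (ℝ × ℝ) |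
        (v.1 ∈ Set.Icc (0:ℝ) 1 ×ˢ Set.Icc (0:ℝ) 1) ∧ (v.2 ∈ Set.Icc (0:ℝ) 1 ×ˢ Set.Icc (0:ℝ) 1) ∧
        (1 - v.1.1 + v.1.2)^2 + (1 - v.1.1 + v.1.2)*(1 - v.2.1 + v.2.2)
          + (1 - v.2.1 + v.2.2)^2 ≤ d^2}
      = ((Set.Icc (0:ℝ) 1 ×ˢ Set.Icc (0:ℝ) 1) ×ˢ (Set.Icc (0:ℝ) 1 ×ˢ Set.Icc (0:ℝ) 1))
          ∩ {v : (ℝ × ℝ) × (ℝ × ℝ) |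
            (1 - v.1.1 + v.1.2)^2 + (1 - v.1.1 + v.1.2)*(1 - v.2.1 + v.2.2)
              + (1 - v.2.1 + v.2.2)^2 ≤ d^2} := by
    ext v
    simp only [Set.mem_setOf_eq, Set.mem_inter_iff, Set.mem_prod]
    tauto
  have hBm : MeasurableSet {v : (ℝ × ℝ) × (ℝ × ℝ) |
        (v.1 ∈ Set.Icc (0:ℝ) 1 ×ˢ Set.Icc (0:ℝ) 1) ∧ (v.2 ∈ Set.Icc (0:ℝ) 1 ×ˢ Set.Icc (0:ℝ) 1) ∧
        (1 - v.1.1 + v.1.2)^2 + (1 - v.1.1 + v.1.2)*(1 - v.2.1 + v.2.2)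
          + (1 - v.2.1 + v.2.2)^2 ≤ d^2} := by
    rw [hBeq]; exact (hI2.prod hI2).inter hcondm
  rw [Measure.volume_eq_prod, Measure.prod_apply hBm]
  have hslice : ∀ u : ℝ × ℝ, volume (Prod.mk u ⁻¹' {v : (ℝ × ℝ) × (ℝ × ℝ) |
        (v.1 ∈ Set.Icc (0:ℝ) 1 ×ˢ Set.Icc (0:ℝ) 1) ∧ (v.2 ∈ Set.Icc (0:ℝ) 1 ×ˢ Set.Icc (0:ℝ) 1) ∧
        (1 - v.1.1 + v.1.2)^2 + (1 - v.1.1 + v.1.2)*(1 - v.2.1 + v.2.2)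
          + (1 - v.2.1 + v.2.2)^2 ≤ d^2})
      = (Set.Icc (0:ℝ) 1 ×ˢ Set.Icc (0:ℝ) 1).indicator
          (fun u => ENNReal.ofReal (W (1 - u.1 + u.2))) u := by
    intro u
    rw [Set.indicator_apply]
    by_cases hu : u ∈ Set.Icc (0:ℝ) 1 ×ˢ Set.Icc (0:ℝ) 1
    · rw [if_pos hu]
      have hα : 0 ≤ 1 - u.1 + u.2 := by
        simp only [Set.mem_prod, Set.mem_Icc] at hu
        linarith [hu.1.2, hu.2.1]
      have hpre : Prod.mk u ⁻¹' {v : (ℝ × ℝ) × (ℝ × ℝ) |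
          (v.1 ∈ Set.Icc (0:ℝ) 1 ×ˢ Set.Icc (0:ℝ) 1) ∧ (v.2 ∈ Set.Icc (0:ℝ) 1 ×ˢ Set.Icc (0:ℝ) 1) ∧
          (1 - v.1.1 + v.1.2)^2 + (1 - v.1.1 + v.1.2)*(1 - v.2.1 + v.2.2)
            + (1 - v.2.1 + v.2.2)^2 ≤ d^2}
        = {v : ℝ × ℝ | v ∈ Set.Icc (0:ℝ) 1 ×ˢ Set.Icc (0:ℝ) 1 ∧
            (1 - u.1 + u.2)^2 + (1 - u.1 + u.2)*(1 - v.1 + v.2) + (1 - v.1 + v.2)^2 ≤ d^2} := by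
        ext v
        simp only [Set.mem_preimage, Set.mem_setOf_eq]
        tauto
      rw [hpre]
      exact hinner _ hα
    · rw [if_neg hu]
      have hpre : Prod.mk u ⁻¹' {v : (ℝ × ℝ) × (ℝ × ℝ) |
          (v.1 ∈ Set.Icc (0:ℝ) 1 ×ˢ Set.Icc (0:ℝ) 1) ∧ (v.2 ∈ Set.Icc (0:ℝ) 1 ×ˢ Set.Icc (0:ℝ) 1) ∧
          (1 - v.1.1 + v.1.2)^2 + (1 - v.1.1 + v.1.2)*(1 - v.2.1 + v.2.2)
            + (1 - v.2.1 + v.2.2)^2 ≤ d^2} = ∅ := by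
        ext v
        simp only [Set.mem_preimage, Set.mem_setOf_eq, Set.mem_empty_iff_false, iff_false]
        tauto
      rw [hpre]
      simp
  rw [lintegral_congr hslice, lintegral_indicator hI2]
  have hWm' : Measurable (fun α : ℝ => ENNReal.ofReal (W α)) :=
    ENNReal.measurable_ofReal.comp hWmeas
  have hWv : ∀ α : ℝ, 1 < α → ENNReal.ofReal (W α) = 0 := by
    intro α hα
    simp only [hW]
    rw [if_neg (by linarith), ENNReal.ofReal_zero]
  rw [pairLemma _ hWm' hWv]
  have hcong2 : ∀ α ∈ Set.Icc (0:ℝ) 1,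
      ENNReal.ofReal α * ENNReal.ofReal (W α) = ENNReal.ofReal (α * W α) := by
    intro α hα
    exact (ENNReal.ofReal_mul hα.1).symm
  rw [setLIntegral_congr_fun measurableSet_Icc hcong2]
  rw [← Set.Icc_union_Ioc_eq_Icc hd0.le hd1,
    lintegral_union measurableSet_Ioc
      (Set.disjoint_left.2 (fun x hx hx' => absurd hx.2 (not_le.2 hx'.1)))]
  have hzero : (∫⁻ α in Set.Ioc d 1, ENNReal.ofReal (α * W α)) = 0 := by
    rw [setLIntegral_congr_fun measurableSet_Ioc
      (fun α hα => by simp only [hW]; rw [if_neg (not_le.2 hα.1), mul_zero, ENNReal.ofReal_zero]),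
      lintegral_zero]
  rw [hzero, add_zero]
  have hmain : ∀ α ∈ Set.Icc (0:ℝ) d, ENNReal.ofReal (α * W α)
      = ENNReal.ofReal (α * (((Real.sqrt (4*d^2 - 3*α^2) - α)/2)^2/2)) := by
    intro α hα
    simp only [hW]
    rw [if_pos hα.2]
  rw [setLIntegral_congr_fun measurableSet_Icc hmain]
  rw [← MeasureTheory.ofReal_integral_eq_lintegral_ofReal]
  · congr 1
    rw [MeasureTheory.integral_Icc_eq_integral_Ioc, ← intervalIntegral.integral_of_le hd0.le]
    exact integral_eval d hd0
  · exact (continuous_id.mul hWcont).integrableOn_Icc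
  · refine (ae_restrict_iff' measurableSet_Icc).2 (Filter.Eventually.of_forall fun α hα => ?_)
    exact mul_nonneg hα.1 (div_nonneg (sq_nonneg _) (by norm_num))

noncomputable section

def LG : EuclideanSpace ℝ (Fin 2) →ₗ[ℝ] EuclideanSpace ℝ (Fin 2) where
  toFun x := x 0 • va + x 1 • vb
  map_add' x y := by
    simp only [PiLp.add_apply]
    module
  map_smul' c x := by
    simp only [PiLp.smul_apply, smul_eq_mul, RingHom.id_apply]
    module

lemma LG_apply (x : EuclideanSpace ℝ (Fin 2)) : LG x = x 0 • va + x 1 • vb := rfl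

lemma det_LG : LinearMap.det LG = Real.sqrt 3 / 2 := by
  have hb := (EuclideanSpace.basisFun (Fin 2) ℝ).toBasis
  rw [← LinearMap.det_toMatrix (EuclideanSpace.basisFun (Fin 2) ℝ).toBasis]
  have : LinearMap.toMatrix (EuclideanSpace.basisFun (Fin 2) ℝ).toBasis
      (EuclideanSpace.basisFun (Fin 2) ℝ).toBasis LG = !![1, 1/2; 0, Real.sqrt 3/2] := by
    ext i j
    fin_cases i <;> fin_cases j <;>
      simp [LinearMap.toMatrix_apply, LG_apply, va, vb, EuclideanSpace.basisFun_apply,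
        PiLp.add_apply, PiLp.smul_apply, EuclideanSpace.single_apply]
  rw [this, Matrix.det_fin_two_of]
  norm_num

-- norm lemma
lemma norm_ab_le_iff (α β d : ℝ) (hd : 0 ≤ d) :
    ‖α • va + β • vb‖ ≤ d ↔ α^2 + α*β + β^2 ≤ d^2 := by
  have h3 : Real.sqrt 3 ^ 2 = 3 := Real.sq_sqrt (by norm_num)
  have hn : ‖α • va + β • vb‖ = Real.sqrt (α^2 + α*β + β^2) := by
    rw [EuclideanSpace.norm_eq]
    congr 1
    rw [Fin.sum_univ_two]
    simp only [PiLp.add_apply, PiLp.smul_apply, smul_eq_mul, va, vb]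
    norm_num [Matrix.cons_val_zero, Matrix.cons_val_one, Matrix.head_cons]
    rw [abs_of_nonneg (Real.sqrt_nonneg 3)]
    nlinarith [h3, sq_abs β]
  rw [hn]
  constructor
  · intro h
    have := Real.sqrt_nonneg (α^2 + α*β + β^2)
    nlinarith [Real.sq_sqrt (show (0:ℝ) ≤ α^2+α*β+β^2 by nlinarith [sq_nonneg (α+β), sq_nonneg α, sq_nonneg β]), h]
  · intro h
    have h1 : α^2+α*β+β^2 ≤ d^2 := h
    calc Real.sqrt (α^2+α*β+β^2) ≤ Real.sqrt (d^2) := Real.sqrt_le_sqrt h1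
    _ = d := Real.sqrt_sq hd

noncomputable def LF : (EuclideanSpace ℝ (Fin 2) × EuclideanSpace ℝ (Fin 2)) →ₗ[ℝ]
    (EuclideanSpace ℝ (Fin 2) × EuclideanSpace ℝ (Fin 2)) := LG.prodMap LG

lemma det_LF : LinearMap.det LF = 3/4 := by
  have h3 : Real.sqrt 3 ^ 2 = 3 := Real.sq_sqrt (by norm_num)
  have hb := (EuclideanSpace.basisFun (Fin 2) ℝ).toBasis
  rw [LF, ← LinearMap.det_toMatrix ((EuclideanSpace.basisFun (Fin 2) ℝ).toBasis.prod
    (EuclideanSpace.basisFun (Fin 2) ℝ).toBasis),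
    LinearMap.toMatrix_prodMap, Matrix.det_fromBlocks_zero₁₂,
    LinearMap.det_toMatrix, det_LG]
  nlinarith

/-- the parameter box set in `E × E`. -/
def Bset (d : ℝ) : Set (EuclideanSpace ℝ (Fin 2) × EuclideanSpace ℝ (Fin 2)) :=
  {z | z.1 0 ∈ Set.Icc (0:ℝ) 1 ∧ z.1 1 ∈ Set.Icc (0:ℝ) 1 ∧
       z.2 0 ∈ Set.Icc (0:ℝ) 1 ∧ z.2 1 ∈ Set.Icc (0:ℝ) 1 ∧
       (1 - z.1 0 + z.2 0)^2 + (1 - z.1 0 + z.2 0)*(1 - z.1 1 + z.2 1)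
         + (1 - z.1 1 + z.2 1)^2 ≤ d^2}

lemma vec0 (s t : ℝ) : (!₂[s,t] : EuclideanSpace ℝ (Fin 2)) 0 = s := rfl
lemma vec1 (s t : ℝ) : (!₂[s,t] : EuclideanSpace ℝ (Fin 2)) 1 = t := rfl

lemma LF_apply (z : EuclideanSpace ℝ (Fin 2) × EuclideanSpace ℝ (Fin 2)) :
    LF z = (LG z.1, LG z.2) := rfl

lemma set_eq (d : ℝ) (hd : 0 ≤ d) :
    {pq : EuclideanSpace ℝ (Fin 2) × EuclideanSpace ℝ (Fin 2) |
      pq.1 ∈ Rhombus ∧ pq.2 ∈ RhombusLD ∧ ‖pq.1 - pq.2‖ ≤ d}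
    = (fun w : EuclideanSpace ℝ (Fin 2) × EuclideanSpace ℝ (Fin 2)
        => w + ((0 : EuclideanSpace ℝ (Fin 2)), va + vb)) '' (LF '' Bset d) := by
  ext ⟨p, q⟩
  simp only [Set.mem_setOf_eq, Set.mem_image]
  constructor
  · rintro ⟨⟨s, t, hs, ht, hp⟩, ⟨q', ⟨s', t', hs', ht', hq'⟩, hqq⟩, hnorm⟩
    have hq : q = s' • va + t' • vb + va + vb := by rw [← hqq, hq']
    have hvec : p - q = -((1 - s + s') • va + (1 - t + t') • vb) := by
      rw [hp, hq]; module
    rw [hvec, norm_neg, norm_ab_le_iff _ _ _ hd] at hnorm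
    refine ⟨LF (!₂[s, t], !₂[s', t']), ⟨(!₂[s, t], !₂[s', t']), ?_, rfl⟩, ?_⟩
    · refine ⟨?_, ?_, ?_, ?_, ?_⟩ <;> simp only [vec0, vec1]
      · exact hs
      · exact ht
      · exact hs'
      · exact ht'
      · exact hnorm
    · rw [LF_apply]
      have h1 : LG (!₂[s, t] : EuclideanSpace ℝ (Fin 2)) = s • va + t • vb := by
        rw [LG_apply, vec0, vec1]
      have h2 : LG (!₂[s', t'] : EuclideanSpace ℝ (Fin 2)) = s' • va + t' • vb := by
        rw [LG_apply, vec0, vec1]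
      rw [Prod.mk_add_mk, Prod.mk.injEq, h1, h2]
      constructor
      · rw [hp]; abel
      · rw [hq]; abel
  · rintro ⟨w, ⟨z, hz, rfl⟩, h⟩
    obtain ⟨hz1, hz2, hz3, hz4, hz5⟩ := hz
    have hp : p = LG z.1 := by
      have := congrArg Prod.fst h
      simp only [LF_apply, Prod.fst_add] at this
      rw [← this, add_zero]
    have hq : q = LG z.2 + (va + vb) := by
      have := congrArg Prod.snd h
      simp only [LF_apply, Prod.snd_add] at this
      rw [← this]
    refine ⟨⟨z.1 0, z.1 1, hz1, hz2, by rw [hp, LG_apply]⟩,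
      ⟨LG z.2, ⟨z.2 0, z.2 1, hz3, hz4, LG_apply z.2⟩, by rw [hq]; abel⟩, ?_⟩
    have hvec : p - q = -((1 - z.1 0 + z.2 0) • va + (1 - z.1 1 + z.2 1) • vb) := by
      rw [hp, hq, LG_apply, LG_apply]; module
    rw [hvec, norm_neg, norm_ab_le_iff _ _ _ hd]
    exact hz5

end

end Aux

theorem rhombus_longdiag_cdf_piece1 :
    ∀ d : ℝ, 0 ≤ d → d ≤ 1 →
      V Rhombus RhombusLD d =
        (3/4) * ((1/6 - Real.pi/(18*Real.sqrt 3))*d^4) := by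
  intro d h0 h1
  have hcnn : 0 ≤ 1/6 - Real.pi/(18*Real.sqrt 3) := by
    have h17 : (1.7:ℝ) ≤ Real.sqrt 3 := by
      nlinarith [Real.sq_sqrt (show (0:ℝ) ≤ 3 by norm_num), Real.sqrt_nonneg 3]
    have hpi := Real.pi_lt_d2
    have hpos : (0:ℝ) < 18 * Real.sqrt 3 := by positivity
    rw [sub_nonneg, div_le_iff₀ hpos]
    nlinarith
  by_cases hdz : d = 0
  · subst hdz
    -- d = 0 case
    have hsub : {pq : EuclideanSpace ℝ (Fin 2) × EuclideanSpace ℝ (Fin 2) |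
        pq.1 ∈ Rhombus ∧ pq.2 ∈ RhombusLD ∧ ‖pq.1 - pq.2‖ ≤ (0:ℝ)}
        ⊆ {pq : EuclideanSpace ℝ (Fin 2) × EuclideanSpace ℝ (Fin 2) | pq.1 = pq.2} := by
      rintro ⟨p, q⟩ ⟨-, -, hn⟩
      have : ‖p - q‖ = 0 := le_antisymm hn (norm_nonneg _)
      simpa [sub_eq_zero] using norm_eq_zero.1 this
    have hdiag : volume {pq : EuclideanSpace ℝ (Fin 2) × EuclideanSpace ℝ (Fin 2) |
        pq.1 = pq.2} = 0 := by
      have hm : MeasurableSet {pq : EuclideanSpace ℝ (Fin 2) × EuclideanSpace ℝ (Fin 2) |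
          pq.1 = pq.2} := (isClosed_eq continuous_fst continuous_snd).measurableSet
      rw [Measure.volume_eq_prod, Measure.prod_apply hm]
      have : ∀ x : EuclideanSpace ℝ (Fin 2),
          (Prod.mk x ⁻¹' {pq : EuclideanSpace ℝ (Fin 2) × EuclideanSpace ℝ (Fin 2) |
            pq.1 = pq.2}) = {x} := by
        intro x
        ext y
        simp [eq_comm]
      simp only [this, measure_singleton, lintegral_zero]
    rw [V, measure_mono_null hsub hdiag]
    simp
  · -- main case
    have hdpos : 0 < d := lt_of_le_of_ne h0 (Ne.symm hdz)
    haveI hHaar : (volume : Measure (EuclideanSpace ℝ (Fin 2) × EuclideanSpace ℝ (Fin 2))).IsAddHaarMeasure :=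
      by rw [Measure.volume_eq_prod]; exact Measure.prod.instIsAddHaarMeasure volume volume
    rw [V, set_eq d h0]
    -- translation invariance
    have htrans : volume ((fun w : EuclideanSpace ℝ (Fin 2) × EuclideanSpace ℝ (Fin 2)
          => w + ((0 : EuclideanSpace ℝ (Fin 2)), va + vb)) '' (LF '' Bset d))
        = volume (LF '' Bset d) := by
      rw [Set.image_add_right]
      have hcomm : (fun x : EuclideanSpace ℝ (Fin 2) × EuclideanSpace ℝ (Fin 2)
          => x + -((0 : EuclideanSpace ℝ (Fin 2)), va + vb))
          = (fun x => -((0 : EuclideanSpace ℝ (Fin 2)), va + vb) + x) :=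
        funext fun x => add_comm _ _
      rw [hcomm, measure_preimage_add]
    rw [htrans, MeasureTheory.Measure.addHaar_image_linearMap, det_LF]
    -- transfer to (ℝ × ℝ) × (ℝ × ℝ)
    have hψ : MeasurePreserving (fun x : EuclideanSpace ℝ (Fin 2) => (x 0, x 1))
        volume volume :=
      (volume_preserving_finTwoArrow ℝ).comp
        (EuclideanSpace.volume_preserving_symm_measurableEquiv_toLp (Fin 2))
    have hΨ := hψ.prod hψ
    rw [← Measure.volume_eq_prod] at hΨ
    set B₂ : Set ((ℝ × ℝ) × (ℝ × ℝ)) := {w | w.1.1 ∈ Set.Icc (0:ℝ) 1 ∧ w.1.2 ∈ Set.Icc (0:ℝ) 1 ∧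
        w.2.1 ∈ Set.Icc (0:ℝ) 1 ∧ w.2.2 ∈ Set.Icc (0:ℝ) 1 ∧
        (1 - w.1.1 + w.2.1)^2 + (1 - w.1.1 + w.2.1)*(1 - w.1.2 + w.2.2)
          + (1 - w.1.2 + w.2.2)^2 ≤ d^2} with hB₂def
    have hB₂m : MeasurableSet B₂ := by
      have : B₂ = ((Set.Icc (0:ℝ) 1 ×ˢ Set.Icc (0:ℝ) 1) ×ˢ (Set.Icc (0:ℝ) 1 ×ˢ Set.Icc (0:ℝ) 1))
          ∩ {w : (ℝ × ℝ) × (ℝ × ℝ) |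
            (1 - w.1.1 + w.2.1)^2 + (1 - w.1.1 + w.2.1)*(1 - w.1.2 + w.2.2)
              + (1 - w.1.2 + w.2.2)^2 ≤ d^2} := by
        ext w
        simp only [hB₂def, Set.mem_setOf_eq, Set.mem_inter_iff, Set.mem_prod]
        tauto
      rw [this]
      exact ((measurableSet_Icc.prod measurableSet_Icc).prod
        (measurableSet_Icc.prod measurableSet_Icc)).inter
        (measurableSet_le (by fun_prop) (by fun_prop))
    have hpre : Bset d = (Prod.map (fun x : EuclideanSpace ℝ (Fin 2) => (x 0, x 1))
        (fun x : EuclideanSpace ℝ (Fin 2) => (x 0, x 1))) ⁻¹' B₂ := rfl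
    rw [hpre, hΨ.measure_preimage hB₂m.nullMeasurableSet, ← Measure.volume_eq_prod]
    -- regroup coordinates
    set T : (ℝ × ℝ) × (ℝ × ℝ) → (ℝ × ℝ) × (ℝ × ℝ) :=
      fun w => ((w.1.1, w.2.1), (w.1.2, w.2.2)) with hTdef
    have hT : MeasurePreserving T volume volume := by
      have hsmall : MeasurePreserving (MeasurableEquiv.prodAssoc :
          ((ℝ × ℝ) × ℝ) ≃ᵐ ℝ × (ℝ × ℝ)) volume volume :=
        MeasureTheory.volume_preserving_prodAssoc
      have hbig : MeasurePreserving (MeasurableEquiv.prodAssoc :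
          ((ℝ × ℝ) × (ℝ × ℝ)) ≃ᵐ ℝ × (ℝ × (ℝ × ℝ))) volume volume :=
        MeasureTheory.volume_preserving_prodAssoc
      have hm : MeasurePreserving (⇑(MeasurableEquiv.prodAssoc :
            ((ℝ × ℝ) × ℝ) ≃ᵐ ℝ × (ℝ × ℝ)) ∘ (Prod.map (Prod.swap : ℝ × ℝ → ℝ × ℝ) (id : ℝ → ℝ))
            ∘ ⇑(MeasurableEquiv.prodAssoc :
            ((ℝ × ℝ) × ℝ) ≃ᵐ ℝ × (ℝ × ℝ)).symm) volume volume :=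
        hsmall.comp ((Measure.measurePreserving_swap.prod (MeasurePreserving.id volume)).comp
          (MeasurePreserving.symm _ hsmall))
      have hfull := (MeasurePreserving.symm _ hbig).comp
        (((MeasurePreserving.id volume).prod hm).comp hbig)
      have hfun : T = ⇑(MeasurableEquiv.prodAssoc :
            ((ℝ × ℝ) × (ℝ × ℝ)) ≃ᵐ ℝ × (ℝ × (ℝ × ℝ))).symm
          ∘ (Prod.map (id : ℝ → ℝ) (⇑(MeasurableEquiv.prodAssoc :
            ((ℝ × ℝ) × ℝ) ≃ᵐ ℝ × (ℝ × ℝ)) ∘ (Prod.map (Prod.swap : ℝ × ℝ → ℝ × ℝ) (id : ℝ → ℝ))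
            ∘ ⇑(MeasurableEquiv.prodAssoc : ((ℝ × ℝ) × ℝ) ≃ᵐ ℝ × (ℝ × ℝ)).symm))
          ∘ ⇑(MeasurableEquiv.prodAssoc :
            ((ℝ × ℝ) × (ℝ × ℝ)) ≃ᵐ ℝ × (ℝ × (ℝ × ℝ))) := by
        funext w
        rfl
      rw [hfun]
      exact hfull
    have hTpre : B₂ = T ⁻¹' {v : (ℝ × ℝ) × (ℝ × ℝ) |
        (v.1 ∈ Set.Icc (0:ℝ) 1 ×ˢ Set.Icc (0:ℝ) 1) ∧ (v.2 ∈ Set.Icc (0:ℝ) 1 ×ˢ Set.Icc (0:ℝ) 1) ∧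
        (1 - v.1.1 + v.1.2)^2 + (1 - v.1.1 + v.1.2)*(1 - v.2.1 + v.2.2)
          + (1 - v.2.1 + v.2.2)^2 ≤ d^2} := by
      ext w
      simp only [hB₂def, hTdef, Set.mem_setOf_eq, Set.mem_preimage, Set.mem_prod]
      tauto
    have hB₃m : MeasurableSet {v : (ℝ × ℝ) × (ℝ × ℝ) |
        (v.1 ∈ Set.Icc (0:ℝ) 1 ×ˢ Set.Icc (0:ℝ) 1) ∧ (v.2 ∈ Set.Icc (0:ℝ) 1 ×ˢ Set.Icc (0:ℝ) 1) ∧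
        (1 - v.1.1 + v.1.2)^2 + (1 - v.1.1 + v.1.2)*(1 - v.2.1 + v.2.2)
          + (1 - v.2.1 + v.2.2)^2 ≤ d^2} := by
      have : {v : (ℝ × ℝ) × (ℝ × ℝ) |
          (v.1 ∈ Set.Icc (0:ℝ) 1 ×ˢ Set.Icc (0:ℝ) 1) ∧ (v.2 ∈ Set.Icc (0:ℝ) 1 ×ˢ Set.Icc (0:ℝ) 1) ∧
          (1 - v.1.1 + v.1.2)^2 + (1 - v.1.1 + v.1.2)*(1 - v.2.1 + v.2.2)
            + (1 - v.2.1 + v.2.2)^2 ≤ d^2}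
          = ((Set.Icc (0:ℝ) 1 ×ˢ Set.Icc (0:ℝ) 1) ×ˢ (Set.Icc (0:ℝ) 1 ×ˢ Set.Icc (0:ℝ) 1))
            ∩ {v : (ℝ × ℝ) × (ℝ × ℝ) |
              (1 - v.1.1 + v.1.2)^2 + (1 - v.1.1 + v.1.2)*(1 - v.2.1 + v.2.2)
                + (1 - v.2.1 + v.2.2)^2 ≤ d^2} := by
        ext v
        simp only [Set.mem_setOf_eq, Set.mem_inter_iff, Set.mem_prod]
        tauto
      rw [this]
      exact ((measurableSet_Icc.prod measurableSet_Icc).prod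
        (measurableSet_Icc.prod measurableSet_Icc)).inter
        (measurableSet_le (by fun_prop) (by fun_prop))
    rw [hTpre, hT.measure_preimage hB₃m.nullMeasurableSet, Nvol d hdpos h1]
    rw [← ENNReal.ofReal_mul (by norm_num), ENNReal.toReal_ofReal]
    · norm_num
    · positivity
end

section
/- For every real number d with 0 ≤ d ≤ √3/2, the measure V(R, R + (b − a), d) of the set of pairs of points (p, q) with p ∈ R, q ∈ R + (b − a) and ‖p − q‖ ≤ d equals (3/4)·[(1/6 + π/(9√3))·d⁴]. -/
open MeasureTheory Real

noncomputable section

/-- The short-diagonal neighbor of the rhombus: R + (b - a). -/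
def RhombusSD : Set (EuclideanSpace ℝ (Fin 2)) := (fun p => p + (vb - va)) '' Rhombus

end

noncomputable section AuxProof

open intervalIntegral
open scoped ENNReal NNReal

abbrev E2 := EuclideanSpace ℝ (Fin 2)

def pt (x y : ℝ) : E2 := x • va + y • vb

lemma pt_apply_zero (x y : ℝ) : pt x y 0 = x + y * (1/2) := by
  simp [pt, va, vb]

lemma pt_apply_one (x y : ℝ) : pt x y 1 = y * (Real.sqrt 3 / 2) := by
  simp [pt, va, vb]

lemma pt_inj {x y x' y' : ℝ} (h : pt x y = pt x' y') : x = x' ∧ y = y' := by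
  have h3 : Real.sqrt 3 ≠ 0 := by positivity
  have h1 := congrFun (congrArg WithLp.ofLp h) 1
  have h0 := congrFun (congrArg WithLp.ofLp h) 0
  rw [pt_apply_one, pt_apply_one] at h1
  rw [pt_apply_zero, pt_apply_zero] at h0
  have hy : y = y' := mul_right_cancel₀ (by positivity : Real.sqrt 3 / 2 ≠ 0) h1
  constructor
  · linarith
  · exact hy

lemma pt_add (x y x' y' : ℝ) : pt x y + pt x' y' = pt (x+x') (y+y') := by
  simp [pt, add_smul]; abel

lemma norm_pt (x y : ℝ) : ‖pt x y‖ = Real.sqrt (x^2 + y^2 + x*y) := by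
  rw [EuclideanSpace.norm_eq]
  congr 1
  rw [Fin.sum_univ_two, pt_apply_zero, pt_apply_one]
  have h3 : (Real.sqrt 3)^2 = 3 := Real.sq_sqrt (by norm_num)
  rw [Real.norm_eq_abs, Real.norm_eq_abs, sq_abs, sq_abs]
  ring_nf
  linear_combination (y^2/4) * h3

lemma mem_rhombus_pt {x y : ℝ} : pt x y ∈ Rhombus ↔ (x ∈ Set.Icc (0:ℝ) 1 ∧ y ∈ Set.Icc (0:ℝ) 1) := by
  constructor
  · rintro ⟨s, t, hs, ht, hp⟩
    obtain ⟨hx, hy⟩ := pt_inj (hp : pt x y = pt s t)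
    exact ⟨hx ▸ hs, hy ▸ ht⟩
  · rintro ⟨hx, hy⟩
    exact ⟨x, y, hx, hy, rfl⟩

lemma vba : vb - va = pt (-1) 1 := by
  simp [pt, va, vb]
  ext i; fin_cases i <;> simp <;> norm_num

lemma mem_sd_pt {x y : ℝ} : pt x y ∈ RhombusSD ↔ ((x+1) ∈ Set.Icc (0:ℝ) 1 ∧ (y-1) ∈ Set.Icc (0:ℝ) 1) := by
  constructor
  · rintro ⟨p, hp, hpq⟩
    obtain ⟨s, t, hs, ht, rfl⟩ := hp
    have : pt x y = pt (s - 1) (t + 1) := by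
      rw [← hpq, vba]; show pt s t + pt (-1) 1 = _; rw [pt_add]; norm_num [sub_eq_add_neg]
    obtain ⟨hx, hy⟩ := pt_inj this
    constructor
    · simpa [hx] using hs
    · simpa [hy] using ht
  · rintro ⟨hx, hy⟩
    refine ⟨pt (x+1) (y-1), mem_rhombus_pt.2 ⟨hx, hy⟩, ?_⟩
    show pt (x+1) (y-1) + (vb - va) = pt x y
    rw [vba, pt_add]; norm_num

def Lmat : Matrix (Fin 2) (Fin 2) ℝ := !![1, 1/2; 0, Real.sqrt 3 / 2]

def Lmap : E2 →ₗ[ℝ] E2 :=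
  Matrix.toLin (PiLp.basisFun 2 ℝ (Fin 2)) (PiLp.basisFun 2 ℝ (Fin 2)) Lmat

lemma Lmap_apply (v : E2) : Lmap v = pt (v 0) (v 1) := by
  ext i
  fin_cases i <;>
    simp [Lmap, Lmat, Matrix.toLin_apply, Matrix.mulVec, Fin.sum_univ_two,
      PiLp.basisFun_apply, pt, va, vb] <;> ring

lemma Lmap_det : LinearMap.det Lmap = Real.sqrt 3 / 2 := by
  rw [Lmap, LinearMap.det_toLin]
  simp [Lmat, Matrix.det_fin_two]

lemma isClosed_rhombus : IsClosed Rhombus := by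
  have h : Rhombus = (fun st : ℝ × ℝ => pt st.1 st.2) '' (Set.Icc 0 1 ×ˢ Set.Icc 0 1) := by
    ext p
    constructor
    · rintro ⟨s, t, hs, ht, rfl⟩
      exact ⟨(s, t), ⟨hs, ht⟩, rfl⟩
    · rintro ⟨⟨s, t⟩, ⟨hs, ht⟩, rfl⟩
      exact ⟨s, t, hs, ht, rfl⟩
  rw [h]
  exact ((isCompact_Icc.prod isCompact_Icc).image (by unfold pt; fun_prop : Continuous fun st : ℝ × ℝ => pt st.1 st.2)).isClosed

lemma sd_eq_preimage : RhombusSD = (fun q : E2 => q - (vb - va)) ⁻¹' Rhombus := by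
  ext q
  constructor
  · rintro ⟨p, hp, rfl⟩
    simpa using hp
  · intro hq
    exact ⟨q - (vb - va), hq, by simp⟩

lemma isClosed_sd : IsClosed RhombusSD := by
  rw [sd_eq_preimage]
  exact isClosed_rhombus.preimage (continuous_id.sub continuous_const)

def Box (z1 z2 : ℝ) : Set E2 :=
  {v : E2 | v 0 ∈ Set.Icc (max (-1) (-z1)) (min 0 (1-z1)) ∧
            v 1 ∈ Set.Icc (max 1 (-z2)) (min 2 (1-z2))}

lemma sec_eq (z1 z2 : ℝ) :
    {q : E2 | q ∈ RhombusSD ∧ pt z1 z2 + q ∈ Rhombus} = Lmap '' Box z1 z2 := by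
  ext q
  constructor
  · rintro ⟨hq, hzq⟩
    obtain ⟨p, hp, rfl⟩ := hq
    obtain ⟨s, t, hs, ht, rfl⟩ := hp
    have hqf : (fun p => p + (vb - va)) (s • va + t • vb) = pt (s - 1) (t + 1) := by
      show pt s t + (vb - va) = _
      rw [vba, pt_add]; norm_num [sub_eq_add_neg]
    rw [hqf] at hzq ⊢
    have hzq' : pt (z1 + (s-1)) (z2 + (t+1)) ∈ Rhombus := by
      rw [← pt_add]; exact hzq
    rw [mem_rhombus_pt] at hzq'
    obtain ⟨⟨h1, h2⟩, ⟨h3, h4⟩⟩ := hzq'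
    simp only [Set.mem_Icc] at hs ht
    refine ⟨!₂[s - 1, t + 1], ?_, ?_⟩
    · constructor
      · simp only [Matrix.cons_val_zero, Set.mem_Icc, max_le_iff, le_min_iff]
        refine ⟨⟨by linarith, by linarith⟩, by linarith, by linarith⟩
      · simp only [Matrix.cons_val_one, Matrix.head_cons, Matrix.cons_val_zero, Set.mem_Icc, max_le_iff, le_min_iff]
        refine ⟨⟨by linarith, by linarith⟩, by linarith, by linarith⟩
    · rw [Lmap_apply]
      simp
  · rintro ⟨v, ⟨hv0, hv1⟩, rfl⟩
    rw [Lmap_apply]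
    simp only [Set.mem_Icc, max_le_iff, le_min_iff] at hv0 hv1
    obtain ⟨⟨h1, h2⟩, h3, h4⟩ := hv0
    obtain ⟨⟨h5, h6⟩, h7, h8⟩ := hv1
    constructor
    · rw [mem_sd_pt]
      simp only [Set.mem_Icc]
      refine ⟨⟨by linarith, by linarith⟩, by linarith, by linarith⟩
    · rw [pt_add, mem_rhombus_pt]
      simp only [Set.mem_Icc]
      refine ⟨⟨by linarith, by linarith⟩, by linarith, by linarith⟩

lemma vol_box (a₁ b₁ a₂ b₂ : ℝ) :
    volume {v : E2 | v 0 ∈ Set.Icc a₁ b₁ ∧ v 1 ∈ Set.Icc a₂ b₂}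
      = ENNReal.ofReal (b₁ - a₁) * ENNReal.ofReal (b₂ - a₂) := by
  have hmp := EuclideanSpace.volume_preserving_symm_measurableEquiv_toLp (Fin 2)
  have hset : {v : E2 | v 0 ∈ Set.Icc a₁ b₁ ∧ v 1 ∈ Set.Icc a₂ b₂}
      = (MeasurableEquiv.toLp 2 (Fin 2 → ℝ)).symm ⁻¹' (Set.univ.pi ![Set.Icc a₁ b₁, Set.Icc a₂ b₂]) := by
    ext v
    simp only [Set.mem_preimage, Set.mem_univ_pi, Set.mem_setOf_eq]
    constructor
    · rintro ⟨h0, h1⟩ i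
      fin_cases i
      · simpa [MeasurableEquiv.coe_toLp_symm] using h0
      · simpa [MeasurableEquiv.coe_toLp_symm] using h1
    · intro h
      have h0 := h 0
      have h1 := h 1
      constructor
      · simpa [MeasurableEquiv.coe_toLp_symm] using h0
      · simpa [MeasurableEquiv.coe_toLp_symm] using h1
  have hms : MeasurableSet (Set.univ.pi ![Set.Icc a₁ b₁, Set.Icc a₂ b₂]) :=
    MeasurableSet.univ_pi (fun i => by fin_cases i <;> exact measurableSet_Icc)
  rw [hset, hmp.measure_preimage hms.nullMeasurableSet]
  rw [volume_pi_pi, Fin.prod_univ_two]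
  simp [Real.volume_Icc]

lemma vol_sec (z1 z2 : ℝ) :
    volume {q : E2 | q ∈ RhombusSD ∧ pt z1 z2 + q ∈ Rhombus}
      = ENNReal.ofReal (Real.sqrt 3 / 2) *
        (ENNReal.ofReal (min 0 (1-z1) - max (-1) (-z1)) *
         ENNReal.ofReal (min 2 (1-z2) - max 1 (-z2))) := by
  rw [sec_eq, Measure.addHaar_image_linearMap volume Lmap, Lmap_det]
  rw [abs_of_nonneg (by positivity)]
  congr 1
  exact vol_box _ _ _ _

def Tset (d : ℝ) : Set (E2 × E2) :=
  {pq | pq.1 ∈ Rhombus ∧ pq.2 ∈ RhombusSD ∧ ‖pq.1 - pq.2‖ ≤ d}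

def Tset' (d : ℝ) : Set (E2 × E2) :=
  {zq | zq.2 ∈ RhombusSD ∧ zq.1 + zq.2 ∈ Rhombus ∧ ‖zq.1‖ ≤ d}

def Freal (d : ℝ) (y : ℝ × ℝ) : ℝ :=
  if y.1^2 + y.2^2 + y.1*y.2 ≤ d^2 then max y.1 0 * max (-y.2) 0 else 0

lemma isClosed_T' (d : ℝ) : IsClosed (Tset' d) := by
  have h1 : IsClosed {zq : E2 × E2 | zq.2 ∈ RhombusSD} := isClosed_sd.preimage continuous_snd
  have h2 : IsClosed {zq : E2 × E2 | zq.1 + zq.2 ∈ Rhombus} :=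
    isClosed_rhombus.preimage (continuous_fst.add continuous_snd)
  have h3 : IsClosed {zq : E2 × E2 | ‖zq.1‖ ≤ d} :=
    isClosed_le continuous_fst.norm continuous_const
  have : Tset' d = {zq : E2 × E2 | zq.2 ∈ RhombusSD} ∩
      ({zq : E2 × E2 | zq.1 + zq.2 ∈ Rhombus} ∩ {zq : E2 × E2 | ‖zq.1‖ ≤ d}) := by
    ext zq; simp [Tset', Set.mem_inter_iff, and_assoc]
  rw [this]
  exact h1.inter (h2.inter h3)

lemma volT_eq_volT' (d : ℝ) : volume (Tset d) = volume (Tset' d) := by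
  have mp : MeasurePreserving (fun z : E2 × E2 => (z.1 - z.2, z.2))
      (volume.prod volume) (volume.prod volume) :=
    measurePreserving_sub_prod volume volume
  have hpre : Tset d = (fun z : E2 × E2 => (z.1 - z.2, z.2)) ⁻¹' Tset' d := by
    ext ⟨p, q⟩
    simp only [Tset, Tset', Set.mem_preimage, Set.mem_setOf_eq, sub_add_cancel]
    tauto
  rw [hpre, Measure.volume_eq_prod, mp.measure_preimage
    ((isClosed_T' d).measurableSet.nullMeasurableSet)]

def Sfun (d : ℝ) (z : E2) : ℝ≥0∞ :=
  if ‖z‖ ≤ d then volume {q : E2 | q ∈ RhombusSD ∧ z + q ∈ Rhombus} else 0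

lemma measurable_sfun (d : ℝ) : Measurable (Sfun d) := by
  have hW : MeasurableSet {zq : E2 × E2 | zq.2 ∈ RhombusSD ∧ zq.1 + zq.2 ∈ Rhombus} := by
    have h1 : IsClosed {zq : E2 × E2 | zq.2 ∈ RhombusSD} := isClosed_sd.preimage continuous_snd
    have h2 : IsClosed {zq : E2 × E2 | zq.1 + zq.2 ∈ Rhombus} :=
      isClosed_rhombus.preimage (continuous_fst.add continuous_snd)
    have : {zq : E2 × E2 | zq.2 ∈ RhombusSD ∧ zq.1 + zq.2 ∈ Rhombus}
        = {zq : E2 × E2 | zq.2 ∈ RhombusSD} ∩ {zq : E2 × E2 | zq.1 + zq.2 ∈ Rhombus} := rfl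
    rw [this]; exact (h1.inter h2).measurableSet
  have hm : Measurable fun z : E2 =>
      volume (Prod.mk z ⁻¹' {zq : E2 × E2 | zq.2 ∈ RhombusSD ∧ zq.1 + zq.2 ∈ Rhombus}) :=
    measurable_measure_prodMk_left hW
  have : Sfun d = fun z => Set.indicator {z : E2 | ‖z‖ ≤ d}
      (fun z => volume (Prod.mk z ⁻¹' {zq : E2 × E2 | zq.2 ∈ RhombusSD ∧ zq.1 + zq.2 ∈ Rhombus})) z := by
    funext z
    rw [Set.indicator_apply]
    rfl
  rw [this]
  exact hm.indicator (isClosed_le continuous_norm continuous_const).measurableSet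

lemma volT'_eq_lint (d : ℝ) : volume (Tset' d) = ∫⁻ z : E2, Sfun d z := by
  rw [Measure.volume_eq_prod, Measure.prod_apply (isClosed_T' d).measurableSet]
  apply lintegral_congr
  intro z
  have : Prod.mk z ⁻¹' Tset' d
      = if ‖z‖ ≤ d then {q : E2 | q ∈ RhombusSD ∧ z + q ∈ Rhombus} else ∅ := by
    split_ifs with h
    · ext q; simp [Tset', h]
    · ext q; simp [Tset', h]
  rw [this, Sfun]
  split_ifs <;> simp

lemma lmap_measurable : Measurable (Lmap : E2 → E2) :=
  Lmap.continuous_of_finiteDimensional.measurable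

lemma lint_change (h : E2 → ℝ≥0∞) (hh : Measurable h) :
    ∫⁻ z : E2, h z = ENNReal.ofReal (Real.sqrt 3 / 2) * ∫⁻ z : E2, h (Lmap z) := by
  have hdet : LinearMap.det Lmap ≠ 0 := by
    rw [Lmap_det]; positivity
  have hmap := Measure.map_linearMap_addHaar_eq_smul_addHaar (volume : Measure E2) hdet
  have h1 : ∫⁻ z : E2, h (Lmap z) = ∫⁻ z, h z ∂(Measure.map Lmap volume) :=
    (lintegral_map hh lmap_measurable).symm
  rw [h1, hmap, lintegral_smul_measure, Lmap_det]
  rw [smul_eq_mul, ← mul_assoc, ← ENNReal.ofReal_mul (by positivity)]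
  rw [abs_of_nonneg (by positivity)]
  have h3 : Real.sqrt 3 ≠ 0 := by positivity
  have : Real.sqrt 3 / 2 * (Real.sqrt 3 / 2)⁻¹ = 1 := by field_simp
  rw [this]
  simp

def cmap : ℝ × ℝ → E2 :=
  (MeasurableEquiv.toLp 2 (Fin 2 → ℝ)) ∘ MeasurableEquiv.finTwoArrow.symm

lemma cmap_mp : MeasurePreserving cmap volume volume :=
  ((EuclideanSpace.volume_preserving_symm_measurableEquiv_toLp (Fin 2)).symm).comp
    (volume_preserving_finTwoArrow ℝ).symm

lemma lmap_cmap (y : ℝ × ℝ) : Lmap (cmap y) = pt y.1 y.2 := by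
  rw [Lmap_apply]
  have h0 : cmap y 0 = y.1 := by
    simp [cmap, MeasurableEquiv.coe_toLp, MeasurableEquiv.finTwoArrow]
  have h1 : cmap y 1 = y.2 := by
    simp [cmap, MeasurableEquiv.coe_toLp, MeasurableEquiv.finTwoArrow]
  rw [h0, h1]

lemma volT_final (d : ℝ) (hd : 0 ≤ d) (hd2 : d ≤ Real.sqrt 3 / 2) :
    volume (Tset d) = ENNReal.ofReal (Real.sqrt 3 / 2) *
      ∫⁻ y : ℝ × ℝ, ENNReal.ofReal ((Real.sqrt 3 / 2) * Freal d y) := by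
  rw [volT_eq_volT', volT'_eq_lint, lint_change (Sfun d) (measurable_sfun d)]
  congr 1
  have hcomp := cmap_mp.lintegral_comp (f := fun z => Sfun d (Lmap z))
    ((measurable_sfun d).comp lmap_measurable)
  rw [← hcomp]
  apply lintegral_congr
  intro y
  show Sfun d (Lmap (cmap y)) = _
  rw [lmap_cmap]
  obtain ⟨y1, y2⟩ := y
  have hQ0 : (0:ℝ) ≤ y1^2 + y2^2 + y1*y2 := by nlinarith [sq_nonneg (y1 + y2/2), sq_nonneg y2]
  have hnorm : ‖pt y1 y2‖ ≤ d ↔ y1^2 + y2^2 + y1*y2 ≤ d^2 := by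
    rw [norm_pt]
    constructor
    · intro h
      have := Real.sq_sqrt hQ0
      nlinarith [Real.sqrt_nonneg (y1^2 + y2^2 + y1*y2)]
    · intro h
      calc Real.sqrt (y1^2 + y2^2 + y1*y2) ≤ Real.sqrt (d^2) := Real.sqrt_le_sqrt h
        _ = d := Real.sqrt_sq hd
  rw [Sfun, Freal]
  simp only
  split_ifs with h h' h'
  · -- both true
    rw [vol_sec]
    have hQ : y1^2 + y2^2 + y1*y2 ≤ 3/4 := by
      have hd3 : d^2 ≤ 3/4 := by
        have h4 : d^2 ≤ (Real.sqrt 3/2)^2 := by nlinarith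
        have : (Real.sqrt 3/2)^2 = 3/4 := by
          rw [div_pow, Real.sq_sqrt (by norm_num : (3:ℝ) ≥ 0)]; norm_num
        linarith
      linarith [h']
    have hy1 : |y1| ≤ 1 := by nlinarith [sq_nonneg (y1 + 2*y2), abs_nonneg y1, sq_abs y1]
    have hy2 : |y2| ≤ 1 := by nlinarith [sq_nonneg (y2 + 2*y1), abs_nonneg y2, sq_abs y2]
    rw [abs_le] at hy1 hy2
    have e1 : min 0 (1 - y1) - max (-1) (-y1) = y1 := by
      rw [min_eq_left (by linarith), max_eq_right (by linarith)]; ring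
    have e2 : min 2 (1 - y2) - max 1 (-y2) = -y2 := by
      rw [min_eq_right (by linarith), max_eq_left (by linarith)]; ring
    rw [e1, e2]
    have o1 : ENNReal.ofReal y1 = ENNReal.ofReal (max y1 0) := by
      rcases le_total y1 0 with hc | hc
      · rw [max_eq_right hc, ENNReal.ofReal_eq_zero.2 hc, ENNReal.ofReal_zero]
      · rw [max_eq_left hc]
    have o2 : ENNReal.ofReal (-y2) = ENNReal.ofReal (max (-y2) 0) := by
      rcases le_total (-y2) 0 with hc | hc
      · rw [max_eq_right hc, ENNReal.ofReal_eq_zero.2 hc, ENNReal.ofReal_zero]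
      · rw [max_eq_left hc]
    rw [o1, o2, ENNReal.ofReal_mul (show (0:ℝ) ≤ Real.sqrt 3/2 by positivity),
      ENNReal.ofReal_mul (le_max_right y1 0)]
  · exact absurd (hnorm.1 h) h'
  · exact absurd (hnorm.2 h') h
  · simp

lemma freal_nonneg (d : ℝ) (y : ℝ × ℝ) : 0 ≤ Freal d y := by
  rw [Freal]
  split_ifs
  · positivity
  · exact le_refl 0

lemma freal_measurable (d : ℝ) : Measurable (Freal d) := by
  have hset : MeasurableSet {y : ℝ × ℝ | y.1^2 + y.2^2 + y.1*y.2 ≤ d^2} :=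
    measurableSet_le (by fun_prop) measurable_const
  exact Measurable.ite hset (by fun_prop) measurable_const

lemma freal_bound (d : ℝ) (hd : 0 ≤ d) (hd2 : d ≤ Real.sqrt 3 / 2) (y : ℝ × ℝ) :
    ‖Freal d y‖ ≤ (Set.Icc (-1:ℝ) 1 ×ˢ Set.Icc (-1:ℝ) 1).indicator (fun _ => (1:ℝ)) y := by
  obtain ⟨y1, y2⟩ := y
  rw [Freal]
  simp only
  split_ifs with h
  · have hd3 : d^2 ≤ 3/4 := by
      have : (Real.sqrt 3/2)^2 = 3/4 := by
        rw [div_pow, Real.sq_sqrt (by norm_num : (0:ℝ) ≤ 3)]; norm_num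
      nlinarith [Real.sqrt_nonneg 3]
    have hQ : y1^2 + y2^2 + y1*y2 ≤ 3/4 := by linarith
    have hy1 : |y1| ≤ 1 := by nlinarith [sq_nonneg (y1 + 2*y2), abs_nonneg y1, sq_abs y1]
    have hy2 : |y2| ≤ 1 := by nlinarith [sq_nonneg (y2 + 2*y1), abs_nonneg y2, sq_abs y2]
    rw [abs_le] at hy1 hy2
    have hmem : (y1, y2) ∈ Set.Icc (-1:ℝ) 1 ×ˢ Set.Icc (-1:ℝ) 1 := by
      rw [Set.mem_prod]
      exact ⟨Set.mem_Icc.2 ⟨hy1.1, hy1.2⟩, Set.mem_Icc.2 ⟨hy2.1, hy2.2⟩⟩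
    rw [Set.indicator_of_mem hmem]
    rw [Real.norm_eq_abs, abs_of_nonneg (by positivity)]
    have m1 : max y1 0 ≤ 1 := max_le (by linarith) (by norm_num)
    have m2 : max (-y2) 0 ≤ 1 := max_le (by linarith) (by norm_num)
    nlinarith [le_max_right y1 0, le_max_right (-y2) 0]
  · simp [Set.indicator_apply]
    split_ifs <;> norm_num

lemma freal_integrable (d : ℝ) (hd : 0 ≤ d) (hd2 : d ≤ Real.sqrt 3 / 2) : Integrable (Freal d) := by
  have hg : Integrable ((Set.Icc (-1:ℝ) 1 ×ˢ Set.Icc (-1:ℝ) 1).indicator (fun _ => (1:ℝ))) := by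
    rw [integrable_indicator_iff (measurableSet_Icc.prod measurableSet_Icc)]
    exact integrableOn_const (isCompact_Icc.prod isCompact_Icc).measure_lt_top.ne
  exact Integrable.mono' hg (freal_measurable d).aestronglyMeasurable
    (Filter.Eventually.of_forall (freal_bound d hd hd2))

lemma volT_toReal (d : ℝ) (hd : 0 ≤ d) (hd2 : d ≤ Real.sqrt 3 / 2) :
    (volume (Tset d)).toReal = 3/4 * ∫ y : ℝ × ℝ, Freal d y := by
  rw [volT_final d hd hd2]
  have hint : Integrable (fun y : ℝ × ℝ => Real.sqrt 3 / 2 * Freal d y) :=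
    (freal_integrable d hd hd2).const_mul _
  have hnn : 0 ≤ᵐ[volume] fun y : ℝ × ℝ => Real.sqrt 3 / 2 * Freal d y :=
    Filter.Eventually.of_forall (fun y => mul_nonneg (by positivity) (freal_nonneg d y))
  rw [← ofReal_integral_eq_lintegral_ofReal hint hnn]
  rw [MeasureTheory.integral_const_mul]
  have hI : 0 ≤ ∫ y : ℝ × ℝ, Freal d y := integral_nonneg (freal_nonneg d)
  rw [← ENNReal.ofReal_mul (show (0:ℝ) ≤ Real.sqrt 3/2 by positivity)]
  rw [ENNReal.toReal_ofReal (mul_nonneg (by positivity) (mul_nonneg (by positivity) hI))]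
  have h3 : (Real.sqrt 3)^2 = 3 := Real.sq_sqrt (by norm_num)
  nlinarith [hI]

def Gfun (d α : ℝ) : ℝ :=
  if 0 ≤ α ∧ 3*α^2 ≤ 4*d^2 then
    α * ((((α + Real.sqrt (4*d^2-3*α^2))/2)^2 - (min ((Real.sqrt (4*d^2-3*α^2) - α)/2) 0)^2)/2)
  else 0

lemma inner_integral (d : ℝ) (hd : 0 < d) (α : ℝ) :
    ∫ y2 : ℝ, Freal d (α, y2) = Gfun d α := by
  by_cases hα : 0 ≤ α
  · by_cases hα2 : 3*α^2 ≤ 4*d^2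
    · -- main case
      set s := Real.sqrt (4*d^2-3*α^2) with hs_def
      have hs0 : 0 ≤ s := Real.sqrt_nonneg _
      have hs2 : s^2 = 4*d^2-3*α^2 := Real.sq_sqrt (by linarith)
      set l := -(α+s)/2 with hl_def
      set u := (s-α)/2 with hu_def
      set m := min u 0 with hm_def
      have hlu : l ≤ u := by rw [hl_def, hu_def]; linarith
      have hl0 : l ≤ 0 := by rw [hl_def]; linarith
      have hlm : l ≤ m := le_min hlu hl0
      have hmu : m ≤ u := min_le_left _ _
      have hm0 : m ≤ 0 := min_le_right _ _
      have hfe : ∀ y2 : ℝ, Freal d (α, y2)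
          = Set.indicator (Set.Icc l u) (fun y => α * max (-y) 0) y2 := by
        intro y2
        rw [Freal, Set.indicator_apply]
        have hiff : (α^2 + y2^2 + α*y2 ≤ d^2) ↔ y2 ∈ Set.Icc l u := by
          rw [Set.mem_Icc, hl_def, hu_def]
          constructor
          · intro h
            constructor
            · nlinarith [sq_nonneg (y2 + α/2 + s/2), sq_nonneg (y2 + α/2 - s/2)]
            · nlinarith [sq_nonneg (y2 + α/2 + s/2), sq_nonneg (y2 + α/2 - s/2)]
          · rintro ⟨h1, h2⟩
            nlinarith
        simp only [max_eq_left hα]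
        exact if_congr hiff rfl rfl
      rw [integral_congr_ae (Filter.Eventually.of_forall hfe)]
      rw [MeasureTheory.integral_indicator measurableSet_Icc]
      rw [MeasureTheory.integral_Icc_eq_integral_Ioc, ← intervalIntegral.integral_of_le hlu]
      have hcont : Continuous fun y : ℝ => α * max (-y) 0 :=
        continuous_const.mul (continuous_neg.max continuous_const)
      rw [← intervalIntegral.integral_add_adjacent_intervals
          (hcont.intervalIntegrable l m) (hcont.intervalIntegrable m u)]
      have e1 : ∫ y in l..m, α * max (-y) 0 = ∫ y in l..m, α * (-y) := by
        apply intervalIntegral.integral_congr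
        intro y hy
        rw [Set.uIcc_of_le hlm, Set.mem_Icc] at hy
        show α * max (-y) 0 = α * (-y)
        rw [max_eq_left (by linarith [hy.2] : (0:ℝ) ≤ -y)]
      have e2 : ∫ y in m..u, α * max (-y) 0 = 0 := by
        by_cases hu : u ≤ 0
        · rw [hm_def, min_eq_left hu, intervalIntegral.integral_same]
        · push_neg at hu
          have hm_eq : m = 0 := min_eq_right hu.le
          rw [hm_eq]
          have : ∫ y in (0:ℝ)..u, α * max (-y) 0 = ∫ y in (0:ℝ)..u, (0:ℝ) := by
            apply intervalIntegral.integral_congr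
            intro y hy
            rw [Set.uIcc_of_le hu.le, Set.mem_Icc] at hy
            show α * max (-y) 0 = 0
            rw [max_eq_right (by linarith [hy.1] : -y ≤ 0), mul_zero]
          rw [this, intervalIntegral.integral_zero]
      rw [e1, e2, add_zero]
      rw [intervalIntegral.integral_const_mul]
      have : ∫ y in l..m, -y = -((m^2 - l^2)/2) := by
        rw [intervalIntegral.integral_neg, integral_id]
      rw [this, Gfun, if_pos ⟨hα, hα2⟩]
      rw [hm_def, hu_def, hl_def]
      ring
    · have hfe : ∀ y2 : ℝ, Freal d (α, y2) = 0 := by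
        intro y2
        rw [Freal, if_neg]
        push_neg at hα2 ⊢
        nlinarith [sq_nonneg (y2 + α/2)]
      rw [integral_congr_ae (Filter.Eventually.of_forall hfe), MeasureTheory.integral_zero,
        Gfun, if_neg (by tauto)]
  · have hfe : ∀ y2 : ℝ, Freal d (α, y2) = 0 := by
      intro y2
      rw [Freal]
      push_neg at hα
      simp only [max_eq_right hα.le, zero_mul]
      split_ifs <;> rfl
    rw [integral_congr_ae (Filter.Eventually.of_forall hfe), MeasureTheory.integral_zero,
      Gfun, if_neg (by tauto)]

def Fq (d α : ℝ) : ℝ :=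
  (3*α^3 - 2*d^2*α) * Real.sqrt (4*d^2-3*α^2)/12
    + (2*d^4/(3*Real.sqrt 3)) * Real.arcsin (Real.sqrt 3/(2*d)*α)

lemma sqrt3_sq : (Real.sqrt 3)^2 = 3 := Real.sq_sqrt (by norm_num)
lemma sqrt3_pos : 0 < Real.sqrt 3 := Real.sqrt_pos.2 (by norm_num)

lemma abs_lt_one_of_sq_lt_one {x : ℝ} (h : x^2 < 1) : |x| < 1 := by
  nlinarith [sq_abs x, abs_nonneg x]

lemma Fq_deriv (d : ℝ) (hd : 0 < d) (α : ℝ) (hpos : 3*α^2 < 4*d^2) :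
    HasDerivAt (Fq d) (α^2 * Real.sqrt (4*d^2-3*α^2)) α := by
  have hpos' : 0 < 4*d^2-3*α^2 := by linarith
  set s := Real.sqrt (4*d^2-3*α^2) with hs_def
  have hs0 : 0 < s := Real.sqrt_pos.2 hpos'
  have hs2 : s^2 = 4*d^2-3*α^2 := Real.sq_sqrt hpos'.le
  have hinner : HasDerivAt (fun x : ℝ => 4*d^2-3*x^2) (-(3*(2*α^1))) α :=
    ((hasDerivAt_pow 2 α).const_mul 3).const_sub (4*d^2)
  have hsqrt : HasDerivAt (fun x : ℝ => Real.sqrt (4*d^2-3*x^2))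
      (1/(2*s) * -(3*(2*α^1))) α := by
    have := (Real.hasDerivAt_sqrt (ne_of_gt hpos')).comp α hinner
    exact this
  have hpoly : HasDerivAt (fun x : ℝ => 3*x^3 - 2*d^2*x) (3*(3*α^2) - 2*d^2) α := by
    have h1 := (hasDerivAt_pow 3 α).const_mul (3:ℝ)
    have h2 := (hasDerivAt_id α).const_mul (2*d^2)
    have := h1.sub h2
    refine this.congr_deriv ?_
    push_cast; ring
  have hprod := (hpoly.mul hsqrt).div_const 12
  -- arcsin part
  have harg : (Real.sqrt 3/(2*d)*α)^2 < 1 := by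
    rw [div_mul_eq_mul_div, div_pow, mul_pow, sqrt3_sq]
    rw [div_lt_one (by positivity)]
    nlinarith
  have habs : |Real.sqrt 3/(2*d)*α| < 1 := abs_lt_one_of_sq_lt_one harg
  rw [abs_lt] at habs
  have hlin : HasDerivAt (fun x : ℝ => Real.sqrt 3/(2*d)*x) (Real.sqrt 3/(2*d)) α := by
    simpa using (hasDerivAt_id α).const_mul (Real.sqrt 3/(2*d))
  have harc0 := Real.hasDerivAt_arcsin (ne_of_gt (by linarith : -1 < Real.sqrt 3/(2*d)*α))
    (ne_of_lt (by linarith : Real.sqrt 3/(2*d)*α < 1))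
  have harc := (harc0.comp α hlin).const_mul (2*d^4/(3*Real.sqrt 3))
  have htot := hprod.add harc
  have hxs : Real.sqrt (1 - (Real.sqrt 3/(2*d)*α)^2) = s/(2*d) := by
    have hx : 1 - (Real.sqrt 3/(2*d)*α)^2 = (s/(2*d))^2 := by
      rw [div_pow, hs2, div_mul_eq_mul_div, div_pow, mul_pow, sqrt3_sq]
      field_simp
      ring
    rw [hx, Real.sqrt_sq (by positivity)]
  rw [hxs] at htot
  have hterm : 2*d^4/(3*Real.sqrt 3) * (1/(s/(2*d)) * (Real.sqrt 3/(2*d)))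
      = 2*d^4/(3*s) := by
    have h3ne : Real.sqrt 3 ≠ 0 := ne_of_gt sqrt3_pos
    field_simp
  rw [hterm] at htot
  refine htot.congr_deriv ?_
  rw [← hs_def]
  have hsne : s ≠ 0 := ne_of_gt hs0
  field_simp
  linear_combination (-(9*α^2+6*d^2)) * hs2

def Hone (d α : ℝ) : ℝ := d^2*α^2/4 - α^4/16 + Fq d α/4

lemma cont_sqrt_poly (d : ℝ) : Continuous fun α : ℝ => Real.sqrt (4*d^2-3*α^2) :=
  Real.continuous_sqrt.comp (by fun_prop)

lemma ftc1 (d : ℝ) (hd : 0 < d) :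
    ∫ α in (0:ℝ)..d, (d^2*α/2 - α^3/4 + α^2*Real.sqrt (4*d^2-3*α^2)/4)
      = Hone d d - Hone d 0 := by
  refine intervalIntegral.integral_eq_sub_of_hasDerivAt (f := Hone d) ?_ ?_
  · intro x hx
    rw [Set.uIcc_of_le hd.le, Set.mem_Icc] at hx
    have hpos : 3*x^2 < 4*d^2 := by nlinarith [hx.1, hx.2]
    have hA : HasDerivAt (fun x : ℝ => d^2*x^2/4) (d^2*((2:ℕ)*x^1)/4) x :=
      ((hasDerivAt_pow 2 x).const_mul (d^2)).div_const 4
    have hB : HasDerivAt (fun x : ℝ => x^4/16) (((4:ℕ)*x^3)/16) x :=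
      (hasDerivAt_pow 4 x).div_const 16
    have hC := (Fq_deriv d hd x hpos).div_const 4
    have htot := (hA.sub hB).add hC
    have hfun : Hone d = fun x : ℝ => (d^2*x^2/4 - x^4/16) + Fq d x/4 := by
      funext y; rw [Hone]
    rw [hfun]
    refine htot.congr_deriv ?_
    push_cast
    ring
  · apply Continuous.intervalIntegrable
    have hs := cont_sqrt_poly d
    exact (((continuous_const.mul continuous_id).div_const 2).sub
      ((continuous_pow 3).div_const 4)).add (((continuous_pow 2).mul hs).div_const 4)

lemma cont_Fq (d : ℝ) : Continuous (Fq d) := by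
  unfold Fq
  have hs := cont_sqrt_poly d
  have harc : Continuous fun α : ℝ => Real.arcsin (Real.sqrt 3/(2*d)*α) :=
    Real.continuous_arcsin.comp (by fun_prop)
  exact (((by fun_prop : Continuous fun α : ℝ => 3*α^3 - 2*d^2*α).mul hs).div_const 12).add
    (continuous_const.mul harc)

lemma sqrt3_lt_two : Real.sqrt 3 < 2 := by
  nlinarith [sqrt3_sq, sqrt3_pos]

lemma ftc2 (d : ℝ) (hd : 0 < d) :
    ∫ α in d..(2*d/Real.sqrt 3), (α^2*Real.sqrt (4*d^2-3*α^2)/2)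
      = Fq d (2*d/Real.sqrt 3)/2 - Fq d d/2 := by
  set c := 2*d/Real.sqrt 3 with hc_def
  have hc2 : c^2 = 4*d^2/3 := by
    rw [hc_def, div_pow, sqrt3_sq]; ring
  have hdc : d ≤ c := by
    rw [hc_def, le_div_iff₀ sqrt3_pos]
    nlinarith [sqrt3_lt_two]
  have hFc : (fun α => Fq d α / 2) = Fq d / (fun _ => 2) := by funext y; simp
  refine intervalIntegral.integral_eq_sub_of_hasDerivAt_of_le (f := fun α => Fq d α / 2) hdc ?_ ?_ ?_
  · exact ((cont_Fq d).div_const 2).continuousOn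
  · intro x hx
    rw [Set.mem_Ioo] at hx
    have hpos : 3*x^2 < 4*d^2 := by nlinarith [hx.1, hx.2, hd]
    exact (Fq_deriv d hd x hpos).div_const 2
  · apply Continuous.intervalIntegrable
    exact ((continuous_pow 2).mul (cont_sqrt_poly d)).div_const 2

lemma Fq_zero (d : ℝ) : Fq d 0 = 0 := by
  simp [Fq]

lemma arcsin_sqrt3_div_two : Real.arcsin (Real.sqrt 3 / 2) = Real.pi / 3 := by
  have h := Real.arcsin_sin (x := Real.pi/3)
    (by linarith [Real.pi_pos]) (by linarith [Real.pi_pos])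
  rw [Real.sin_pi_div_three] at h
  exact h

lemma Fq_d (d : ℝ) (hd : 0 < d) :
    Fq d d = d^4/12 + (2*d^4/(3*Real.sqrt 3))*(Real.pi/3) := by
  rw [Fq]
  rw [show 4*d^2-3*d^2 = d^2 by ring, Real.sqrt_sq hd.le]
  rw [show Real.sqrt 3/(2*d)*d = Real.sqrt 3/2 by field_simp]
  rw [arcsin_sqrt3_div_two]
  ring

lemma Fq_c (d : ℝ) (hd : 0 < d) :
    Fq d (2*d/Real.sqrt 3) = (2*d^4/(3*Real.sqrt 3))*(Real.pi/2) := by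
  rw [Fq]
  have hc2 : (2*d/Real.sqrt 3)^2 = 4*d^2/3 := by
    rw [div_pow, sqrt3_sq]; ring
  rw [show 4*d^2-3*(2*d/Real.sqrt 3)^2 = 0 by rw [hc2]; ring, Real.sqrt_zero]
  rw [show Real.sqrt 3/(2*d)*(2*d/Real.sqrt 3) = 1 by
    field_simp]
  rw [Real.arcsin_one]
  ring

lemma outer_integral (d : ℝ) (hd : 0 < d) :
    ∫ α : ℝ, Gfun d α = (1/6 + Real.pi/(9*Real.sqrt 3))*d^4 := by
  set c := 2*d/Real.sqrt 3 with hc_def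
  have hc2 : c^2 = 4*d^2/3 := by rw [hc_def, div_pow, sqrt3_sq]; ring
  have hc0 : 0 < c := by rw [hc_def]; positivity
  have hdc : d ≤ c := by
    rw [hc_def, le_div_iff₀ sqrt3_pos]
    nlinarith [sqrt3_lt_two]
  have hind : ∀ α, Gfun d α = Set.indicator (Set.Icc 0 c) (Gfun d) α := by
    intro α
    rw [Set.indicator_apply]
    by_cases hm : α ∈ Set.Icc 0 c
    · rw [if_pos hm]
    · rw [if_neg hm, Gfun, if_neg]
      rintro ⟨h1, h2⟩
      apply hm
      rw [Set.mem_Icc]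
      refine ⟨h1, ?_⟩
      nlinarith [hc0]
  rw [integral_congr_ae (Filter.Eventually.of_forall hind),
    MeasureTheory.integral_indicator measurableSet_Icc,
    MeasureTheory.integral_Icc_eq_integral_Ioc, ← intervalIntegral.integral_of_le hc0.le]
  have heq1 : Set.EqOn (Gfun d)
      (fun α => d^2*α/2 - α^3/4 + α^2*Real.sqrt (4*d^2-3*α^2)/4) (Set.uIcc 0 d) := by
    intro α hα
    rw [Set.uIcc_of_le hd.le, Set.mem_Icc] at hα
    have hs0 : 0 ≤ Real.sqrt (4*d^2-3*α^2) := Real.sqrt_nonneg _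
    have hs2 : (Real.sqrt (4*d^2-3*α^2))^2 = 4*d^2-3*α^2 :=
      Real.sq_sqrt (by nlinarith [hα.1, hα.2])
    have hαs : α ≤ Real.sqrt (4*d^2-3*α^2) := by nlinarith [hα.1, hα.2]
    rw [Gfun, if_pos ⟨hα.1, by nlinarith [hα.1, hα.2]⟩]
    rw [min_eq_right (by linarith : (0:ℝ) ≤ (Real.sqrt (4*d^2-3*α^2) - α)/2)]
    linear_combination (α/8) * hs2
  have heq2 : Set.EqOn (Gfun d)
      (fun α => α^2*Real.sqrt (4*d^2-3*α^2)/2) (Set.uIcc d c) := by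
    intro α hα
    rw [Set.uIcc_of_le hdc, Set.mem_Icc] at hα
    have hα0 : 0 ≤ α := le_trans hd.le hα.1
    have h34 : 3*α^2 ≤ 4*d^2 := by nlinarith [hα.2, hα.1, hc2]
    have hs0 : 0 ≤ Real.sqrt (4*d^2-3*α^2) := Real.sqrt_nonneg _
    have hs2 : (Real.sqrt (4*d^2-3*α^2))^2 = 4*d^2-3*α^2 :=
      Real.sq_sqrt (by linarith)
    have hsα : Real.sqrt (4*d^2-3*α^2) ≤ α := by nlinarith [hα.1]
    rw [Gfun, if_pos ⟨hα0, h34⟩]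
    rw [min_eq_left (by linarith : (Real.sqrt (4*d^2-3*α^2) - α)/2 ≤ 0)]
    ring
  have hint1 : IntervalIntegrable (Gfun d) volume 0 d := by
    apply ContinuousOn.intervalIntegrable
    apply ContinuousOn.congr (f := fun α => d^2*α/2 - α^3/4 + α^2*Real.sqrt (4*d^2-3*α^2)/4)
    · exact Continuous.continuousOn (by
        exact (((continuous_const.mul continuous_id).div_const 2).sub
          ((continuous_pow 3).div_const 4)).add
          (((continuous_pow 2).mul (cont_sqrt_poly d)).div_const 4))
    · exact heq1
  have hint2 : IntervalIntegrable (Gfun d) volume d c := by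
    apply ContinuousOn.intervalIntegrable
    apply ContinuousOn.congr (f := fun α => α^2*Real.sqrt (4*d^2-3*α^2)/2)
    · exact (((continuous_pow 2).mul (cont_sqrt_poly d)).div_const 2).continuousOn
    · exact heq2
  rw [← intervalIntegral.integral_add_adjacent_intervals hint1 hint2]
  rw [intervalIntegral.integral_congr heq1, intervalIntegral.integral_congr heq2]
  rw [ftc1 d hd]
  rw [hc_def] at *
  rw [ftc2 d hd]
  rw [Hone, Hone, Fq_zero, Fq_d d hd, Fq_c d hd]
  have h3 := sqrt3_sq
  have h3' := sqrt3_pos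
  field_simp
  ring

lemma I_closed (d : ℝ) (hd : 0 < d) (hint : Integrable (Freal d)) :
    ∫ y : ℝ × ℝ, Freal d y = (1/6 + Real.pi/(9*Real.sqrt 3))*d^4 := by
  have hprod : (volume : Measure (ℝ × ℝ)) = (volume : Measure ℝ).prod volume :=
    Measure.volume_eq_prod ℝ ℝ
  rw [hprod] at hint ⊢
  rw [MeasureTheory.integral_prod _ hint]
  have : ∀ x : ℝ, (∫ y : ℝ, Freal d (x, y)) = Gfun d x := fun x => inner_integral d hd x
  rw [integral_congr_ae (Filter.Eventually.of_forall this)]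
  exact outer_integral d hd

lemma I_zero : ∫ y : ℝ × ℝ, Freal 0 y = 0 := by
  have h : ∀ y : ℝ × ℝ, Freal 0 y = 0 := by
    rintro ⟨y1, y2⟩
    rw [Freal]
    split_ifs with h
    · simp only at h
      rcases le_or_gt y1 0 with h1 | h1
      · rw [max_eq_right h1, zero_mul]
      · rcases le_or_gt (-y2) 0 with h2 | h2
        · rw [max_eq_right h2, mul_zero]
        · exfalso
          nlinarith [sq_nonneg (y1 + y2), mul_pos h1 h2]
    · rfl
  rw [integral_congr_ae (Filter.Eventually.of_forall h), MeasureTheory.integral_zero]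


end AuxProof

theorem rhombus_shortdiag_cdf_piece1 :
    ∀ d : ℝ, 0 ≤ d → d ≤ Real.sqrt 3 / 2 →
      V Rhombus RhombusSD d =
        (3/4) * ((1/6 + Real.pi/(9*Real.sqrt 3))*d^4) := by
  intro d hd hd2
  have hV : V Rhombus RhombusSD d = (volume (Tset d)).toReal := rfl
  rw [hV, volT_toReal d hd hd2]
  rcases eq_or_lt_of_le hd with heq | hpos
  · rw [← heq, I_zero]
    norm_num
  · rw [I_closed d hpos (freal_integrable d hd hd2)]
end
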